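/- If a formula α of M⊃ has a natural deduction proof, then α has a natural deduction proof in which every application of ⊃-Intro is greedy, i.e., every ⊃-Intro application inferring A⊃B discharges all occurrences of A that are open assumptions of the sub-derivation of its premise B. -/

import Mathlib

/-- Formulas of minimal implicational logic M⊃. -/
inductive MFormula : Type
  | var : ℕ → MFormula
  | imp : MFormula → MFormula → MFormula
deriving DecidableEq

namespace MFormula

/-- Size of a formula: number of vertices of its syntax tree. -/
def size : MFormula → ℕ
  | .var _ => 1
  | .imp a b => a.size + b.size + 1

/-- Subformula relation. -/
inductive Subf : MFormula → MFormula → Prop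
  | refl (t : MFormula) : Subf t t
  | impL {s a b : MFormula} : Subf s a → Subf s (imp a b)
  | impR {s a b : MFormula} : Subf s b → Subf s (imp a b)

/-- The finite set of subformulas of a formula. -/
def subformulas : MFormula → Finset MFormula
  | .var n => {.var n}
  | .imp a b => insert (imp a b) (a.subformulas ∪ b.subformulas)

end MFormula

/-- Natural deduction derivation trees for M⊃.  A leaf is an assumption
occurrence, carrying its formula and `none` if it stays open, or `some n`
if it is discharged by the `n`-th ⊃-Intro application below it (de Bruijn
style, counting enclosing ⊃-Intro applications from the leaf downwards).
`elim a b` applies ⊃-Elim with minor premise `a` and major premise `b`;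
`intro A t` applies ⊃-Intro discharging (the marked occurrences of) `A`. -/
inductive NDTree : Type
  | leaf : MFormula → Option ℕ → NDTree
  | elim : NDTree → NDTree → NDTree
  | intro : MFormula → NDTree → NDTree
deriving DecidableEq

namespace NDTree

/-- Conclusion of a derivation tree relative to the list of formulas
introduced by enclosing ⊃-Intro applications (innermost first);
`none` if the tree is not a well-formed derivation. -/
def concl : NDTree → List MFormula → Option MFormula
  | .leaf A none, _ => some A
  | .leaf A (some n), ctx => if ctx[n]? = some A then some A else none
  | .elim a b, ctx =>
      match concl a ctx, concl b ctx with
      | some x, some (.imp p q) => if p = x then some q else none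
      | _, _ => none
  | .intro A t, ctx => (concl t (A :: ctx)).map (fun B => MFormula.imp A B)

/-- Size of a derivation: its number of nodes. -/
def size : NDTree → ℕ
  | .leaf _ _ => 1
  | .elim a b => a.size + b.size + 1
  | .intro _ t => t.size + 1

/-- Height of a derivation: maximal number of edges on a root-to-leaf path. -/
def height : NDTree → ℕ
  | .leaf _ _ => 0
  | .elim a b => max a.height b.height + 1
  | .intro _ t => t.height + 1

/-- Open assumptions of a subtree sitting below `d` of its own
⊃-Intro applications (at top level `d = 0`): leaves discharged by no
⊃-Intro of the subtree itself. -/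
def openAssumAux : NDTree → ℕ → Finset MFormula
  | .leaf A none, _ => {A}
  | .leaf A (some n), d => if d ≤ n then {A} else ∅
  | .elim a b, d => openAssumAux a d ∪ openAssumAux b d
  | .intro _ t, d => openAssumAux t (d + 1)

/-- The set of open (undischarged) assumptions of a derivation. -/
def openAssum (t : NDTree) : Finset MFormula := openAssumAux t 0

/-- A derivation is normal if no formula occurrence is simultaneously the
conclusion of a ⊃-Intro and the major premise of a ⊃-Elim. -/
def Normal : NDTree → Prop
  | .leaf _ _ => True
  | .elim a b => Normal a ∧ Normal b ∧ ∀ A u, b ≠ .intro A u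
  | .intro _ t => Normal t

/-- `T` is a proof of `α`: a derivation with conclusion `α` and
no open assumptions. -/
def IsProofOf (t : NDTree) (α : MFormula) : Prop :=
  concl t [] = some α ∧ openAssum t = ∅

/-- A normal derivation (in context `ctx`) is expanded if every minimal
formula, i.e. every formula occurrence that is both the conclusion of a
⊃-Elim and the premise of a ⊃-Intro, is a propositional variable. -/
def Expanded : NDTree → List MFormula → Prop
  | .leaf _ _, _ => True
  | .elim a b, ctx => Expanded a ctx ∧ Expanded b ctx
  | .intro A t, ctx => Expanded t (A :: ctx) ∧
      (∀ u v, t = .elim u v → ∃ i, concl t (A :: ctx) = some (.var i))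

/-- `Subtree s t`: `s` is a sub-derivation (a node of `t` together with
everything above it) of `t`. -/
inductive Subtree : NDTree → NDTree → Prop
  | refl (t : NDTree) : Subtree t t
  | elimL {s a b : NDTree} : Subtree s a → Subtree s (.elim a b)
  | elimR {s a b : NDTree} : Subtree s b → Subtree s (.elim a b)
  | intro {s : NDTree} {A : MFormula} {t : NDTree} : Subtree s t → Subtree s (.intro A t)

/-- Number of instances (sub-derivation occurrences identical to `s`
as labeled trees) of `s` in a derivation. -/
def countInst (s : NDTree) : NDTree → ℕ
  | .leaf A o => if NDTree.leaf A o = s then 1 else 0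
  | .elim a b => (if NDTree.elim a b = s then 1 else 0) + countInst s a + countInst s b
  | .intro A t => (if NDTree.intro A t = s then 1 else 0) + countInst s t

/-- Number of instances of `s` occurring at level (distance from the root) `μ`. -/
def countInstAt (s : NDTree) : NDTree → ℕ → ℕ
  | t, 0 => if t = s then 1 else 0
  | .leaf _ _, _ + 1 => 0
  | .elim a b, n + 1 => countInstAt s a n + countInstAt s b n
  | .intro _ t, n + 1 => countInstAt s t n

/-- `OccAt T ctx s ctx'` : `s` occurs in `T` (whose own context is `ctx`)
as a node-with-everything-above-it, with enclosing-intro context `ctx'`. -/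
inductive OccAt : NDTree → List MFormula → NDTree → List MFormula → Prop
  | refl (t : NDTree) (ctx : List MFormula) : OccAt t ctx t ctx
  | elimL {T : NDTree} {ctx : List MFormula} {a b : NDTree} {ctx' : List MFormula} :
      OccAt T ctx (.elim a b) ctx' → OccAt T ctx a ctx'
  | elimR {T : NDTree} {ctx : List MFormula} {a b : NDTree} {ctx' : List MFormula} :
      OccAt T ctx (.elim a b) ctx' → OccAt T ctx b ctx'
  | intro {T : NDTree} {ctx : List MFormula} {A : MFormula} {t : NDTree} {ctx' : List MFormula} :
      OccAt T ctx (.intro A t) ctx' → OccAt T ctx t (A :: ctx')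

/-- Each node of a derivation lies on a unique branch; branches are in
bijection with their endpoints: the root of the derivation and the minor
premises of ⊃-Elim applications. -/
def IsBranchEndpoint (T s : NDTree) (ctx : List MFormula) : Prop :=
  (s = T ∧ ctx = []) ∨ ∃ u, OccAt T [] (NDTree.elim s u) ctx

/-- The (top-down) sequence of formulas of the branch ending at the root of
the given subtree: trace upwards through premises of ⊃-Intro and major
premises of ⊃-Elim up to a top-formula. -/
def branchSeq : NDTree → List MFormula → Option (List MFormula)
  | .leaf A o, ctx => (concl (.leaf A o) ctx).map (fun c => [c])
  | .elim a b, ctx =>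
      match branchSeq b ctx, concl (.elim a b) ctx with
      | some l, some c => some (l ++ [c])
      | _, _ => none
  | .intro A t, ctx =>
      match branchSeq t (A :: ctx), concl (.intro A t) ctx with
      | some l, some c => some (l ++ [c])
      | _, _ => none

/-- The (top-down) E-part of the branch ending at the root of the given
subtree: the top-formula and the successive conclusions of major-premise
⊃-Elim steps, ending at the minimal formula of the branch. -/
def epart : NDTree → List MFormula → Option (List MFormula)
  | .leaf A o, ctx => (concl (.leaf A o) ctx).map (fun c => [c])
  | .elim a b, ctx =>
      match epart b ctx, concl (.elim a b) ctx with
      | some l, some c => some (l ++ [c])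
      | _, _ => none
  | .intro A t, ctx => epart t (A :: ctx)

/-- Number of ⊃-Intro applications forming the I-part at the bottom of a
branch endpoint subtree. -/
def introCount : NDTree → ℕ
  | .intro _ t => introCount t + 1
  | _ => 0

/-- Count of branch endpoints strictly inside the given subtree (i.e. minor
premises of ⊃-Elim) whose branch has formula sequence `b`. -/
def brCount (b : List MFormula) : NDTree → List MFormula → ℕ
  | .leaf _ _, _ => 0
  | .elim a c, ctx =>
      (if branchSeq a ctx = some b then 1 else 0) + brCount b a ctx + brCount b c ctx
  | .intro A t, ctx => brCount b t (A :: ctx)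

/-- Total number of branches of `T` whose formula sequence is `b`. -/
def brTotal (b : List MFormula) (T : NDTree) : ℕ :=
  (if branchSeq T [] = some b then 1 else 0) + brCount b T []

/-- Count of branch endpoints strictly inside the given subtree (whose root
is at level `d` of the ambient derivation) whose branch has formula
sequence `b` and whose minimal formula occurs at level `μ`. -/
def brMinCount (b : List MFormula) (μ : ℕ) : NDTree → List MFormula → ℕ → ℕ
  | .leaf _ _, _, _ => 0
  | .elim a c, ctx, d =>
      (if branchSeq a ctx = some b ∧ d + 1 + introCount a = μ then 1 else 0)
      + brMinCount b μ a ctx (d + 1) + brMinCount b μ c ctx (d + 1)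
  | .intro A t, ctx, d => brMinCount b μ t (A :: ctx) (d + 1)

/-- Total number of branches of `T` with formula sequence `b` whose minimal
formula occurs at level `μ` of `T`. -/
def brMinTotal (b : List MFormula) (μ : ℕ) (T : NDTree) : ℕ :=
  (if branchSeq T [] = some b ∧ introCount T = μ then 1 else 0) + brMinCount b μ T [] 0

/-- No occurrence of `A` in the given subtree (sitting at intro-depth `d`
below a fixed ⊃-Intro application) is an open assumption of the subtree
escaping that ⊃-Intro: every leaf labeled `A` is discharged by an
⊃-Intro at distance at most `d`. -/
def NoOpenBeyond (A : MFormula) : NDTree → ℕ → Prop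
  | .leaf B o, d => B = A → ∃ n, o = some n ∧ n ≤ d
  | .elim a b, d => NoOpenBeyond A a d ∧ NoOpenBeyond A b d
  | .intro _ t, d => NoOpenBeyond A t (d + 1)

/-- Every ⊃-Intro application of the derivation is greedy: it discharges
all occurrences of its assumption that are open in the sub-derivation of
its premise. -/
def Greedy : NDTree → Prop
  | .leaf _ _ => True
  | .elim a b => Greedy a ∧ Greedy b
  | .intro A t => NoOpenBeyond A t 0 ∧ Greedy t

/-- A matrix of `T`: a sub-derivation all of whose instances in `T` occur
at a single level. -/
def IsMatrix (s T : NDTree) : Prop :=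
  Subtree s T ∧ ∃ μ, ∀ ν, 0 < countInstAt s T ν → ν = μ

end NDTree

/-- A Kripke model for M⊃: a preordered set of worlds with a monotone
valuation on propositional variables. -/
structure KModel where
  World : Type
  le : World → World → Prop
  le_refl : ∀ w, le w w
  le_trans : ∀ {a b c}, le a b → le b c → le a c
  val : World → ℕ → Prop
  mono : ∀ {w w'}, le w w' → ∀ p, val w p → val w' p

/-- Kripke satisfaction for M⊃. -/
def KSat (M : KModel) : MFormula → M.World → Prop
  | .var p, w => M.val w p
  | .imp a b, w => ∀ w', M.le w w' → KSat M a w' → KSat M b w'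

/-- Semantic entailment: every world of every Kripke model satisfying all
of `Δ` satisfies `β`. -/
def KEntails (Δ : Set MFormula) (β : MFormula) : Prop :=
  ∀ (M : KModel) (w : M.World), (∀ δ ∈ Δ, KSat M δ w) → KSat M β w

namespace NDTree

/-- Index of the first occurrence of `A` in a list. -/
def idx (A : MFormula) : List MFormula → Option ℕ
  | [] => none
  | B :: l => if B = A then some 0 else (idx A l).map (· + 1)

theorem idx_get {A : MFormula} : ∀ {ctx : List MFormula} {n : ℕ},
    idx A ctx = some n → ctx[n]? = some A
  | [], n, h => by simp [idx] at h
  | B :: l, n, h => by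
      by_cases hBA : B = A
      · simp [idx, hBA] at h; subst h; simp [hBA]
      · simp [idx, hBA] at h
        obtain ⟨m, hm, rfl⟩ := h
        simpa using idx_get hm

theorem idx_of_get {A : MFormula} : ∀ {ctx : List MFormula} {n : ℕ},
    ctx[n]? = some A → ∃ m ≤ n, idx A ctx = some m
  | [], n, h => by simp at h
  | B :: l, n, h => by
      by_cases hBA : B = A
      · exact ⟨0, Nat.zero_le _, by simp [idx, hBA]⟩
      · cases n with
        | zero => simp at h; exact absurd h hBA
        | succ n =>
          simp at h
          obtain ⟨m, hm, hidx⟩ := idx_of_get h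
          exact ⟨m + 1, by omega, by simp [idx, hBA, hidx]⟩

theorem idx_append (A : MFormula) (l ctx : List MFormula) :
    ∃ m ≤ l.length, idx A (l ++ A :: ctx) = some m := by
  have : (l ++ A :: ctx)[l.length]? = some A := by
    simp [List.getElem?_append_right (le_refl l.length)]
  exact idx_of_get this

/-- Relabel a derivation so that every leaf is discharged by the nearest
enclosing ⊃-Intro on its formula (if any). -/
def relabel : NDTree → List MFormula → NDTree
  | .leaf A _, ctx => .leaf A (idx A ctx)
  | .elim a b, ctx => .elim (relabel a ctx) (relabel b ctx)
  | .intro A t, ctx => .intro A (relabel t (A :: ctx))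

theorem concl_relabel : ∀ (t : NDTree) (ctx : List MFormula) (α : MFormula),
    concl t ctx = some α → concl (relabel t ctx) ctx = some α
  | .leaf A none, ctx, α, h => by
      simp [concl] at h; subst h
      cases hi : idx A ctx with
      | none => simp [relabel, hi, concl]
      | some n => simp [relabel, hi, concl, idx_get hi]
  | .leaf A (some n), ctx, α, h => by
      simp [concl] at h
      obtain ⟨hn, rfl⟩ := h
      obtain ⟨m, _, hm⟩ := idx_of_get hn
      simp [relabel, hm, concl, idx_get hm]
  | .elim a b, ctx, α, h => by
      simp only [concl] at h ⊢
      cases ha : concl a ctx with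
      | none => simp [ha] at h
      | some x =>
        cases hb : concl b ctx with
        | none => simp [ha, hb] at h
        | some y =>
          cases y with
          | var i => simp [ha, hb] at h
          | imp p q =>
            simp only [relabel, concl]
            rw [concl_relabel a ctx x ha, concl_relabel b ctx _ hb]
            simpa [ha, hb] using h
  | .intro A t, ctx, α, h => by
      simp only [concl, relabel] at h ⊢
      cases ht : concl t (A :: ctx) with
      | none => simp [ht] at h
      | some B => rw [concl_relabel t (A :: ctx) B ht]; simpa [ht] using h

theorem open_relabel : ∀ (t : NDTree) (l ctx : List MFormula) (β : MFormula),
    concl t (l ++ ctx) = some β →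
    openAssumAux (relabel t (l ++ ctx)) l.length ⊆ openAssumAux t l.length
  | .leaf A none, l, ctx, β, _ => by
      cases hi : idx A (l ++ ctx) with
      | none => simp [relabel, hi, openAssumAux]
      | some n =>
        simp only [relabel, hi, openAssumAux]
        split <;> simp
  | .leaf A (some n), l, ctx, β, h => by
      simp [concl] at h
      obtain ⟨hn, rfl⟩ := h
      obtain ⟨m, hmn, hm⟩ := idx_of_get hn
      simp only [relabel, hm, openAssumAux]
      split <;> split <;> first | (exfalso; omega) | simp
  | .elim a b, l, ctx, β, h => by
      simp only [concl] at h
      cases ha : concl a (l ++ ctx) with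
      | none => simp [ha] at h
      | some x =>
        cases hb : concl b (l ++ ctx) with
        | none => simp [ha, hb] at h
        | some y =>
          simp only [relabel, openAssumAux]
          exact Finset.union_subset_union (open_relabel a l ctx x ha)
            (open_relabel b l ctx y hb)
  | .intro A t, l, ctx, β, h => by
      simp only [concl] at h
      cases ht : concl t (A :: (l ++ ctx)) with
      | none => simp [ht] at h
      | some B =>
        simp only [relabel, openAssumAux]
        have := open_relabel t (A :: l) ctx B (by simpa using ht)
        simpa using this

theorem noOpen_relabel (A : MFormula) : ∀ (t : NDTree) (l ctx : List MFormula),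
    NoOpenBeyond A (relabel t (l ++ A :: ctx)) l.length
  | .leaf B o, l, ctx => by
      simp only [relabel, NoOpenBeyond]
      rintro rfl
      obtain ⟨m, hm, hidx⟩ := idx_append B l ctx
      exact ⟨m, hidx, hm⟩
  | .elim a b, l, ctx =>
      ⟨noOpen_relabel A a l ctx, noOpen_relabel A b l ctx⟩
  | .intro C t, l, ctx => by
      simp only [relabel, NoOpenBeyond]
      have := noOpen_relabel A t (C :: l) ctx
      simpa using this

theorem greedy_relabel : ∀ (t : NDTree) (ctx : List MFormula),
    Greedy (relabel t ctx)
  | .leaf _ _, _ => trivial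
  | .elim a b, ctx => ⟨greedy_relabel a ctx, greedy_relabel b ctx⟩
  | .intro A t, ctx => by
      refine ⟨?_, greedy_relabel t (A :: ctx)⟩
      have := noOpen_relabel A t [] ctx
      simpa using this

end NDTree

/-- if α has a proof, it has a proof in which every ⊃-Intro
application is greedy. -/
theorem greedy_discharge (α : MFormula)
    (h : ∃ T : NDTree, T.IsProofOf α) :
    ∃ T' : NDTree, T'.IsProofOf α ∧ T'.Greedy := by
  obtain ⟨T, hc, ho⟩ := h
  refine ⟨T.relabel [], ⟨NDTree.concl_relabel T [] α hc, ?_⟩, NDTree.greedy_relabel T []⟩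
  have h2 := NDTree.open_relabel T [] [] α hc
  simp only [List.nil_append, List.length_nil] at h2
  have h0 : T.openAssumAux 0 = ∅ := ho
  rw [h0] at h2
  show (T.relabel []).openAssumAux 0 = ∅
  exact Finset.subset_empty.mp h2
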